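/- arXiv:2301.12009 — 3 statements merged into one kernel-verified Lean document; each statement's English description precedes it below -/
import Mathlib

section
/- Positivity of the Wald-type quadratic form under alternatives (core of the consistency part of Theorem 2): Let k ≥ 1 and r ≥ 1, let Σ be a symmetric positive definite k×k real matrix, H an r×k real matrix, and C ∈ ℝ^k with H·C ≠ 0. Let P be any r×r real matrix satisfying the four Penrose equations for M = H·Σ·Hᵀ, namely M·P·M = M, P·M·P = P, (M·P)ᵀ = M·P and (P·M)ᵀ = P·M (i.e. P is the Moore–Penrose inverse of M). Then (H·C)ᵀ·P·(H·C) > 0. -/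
open Matrix

/-- Positivity of the Wald-type quadratic form under alternatives:
if `Σ` is symmetric positive definite, `H C ≠ 0`, and `P` satisfies the four Penrose
equations for `M = H Σ Hᵀ` (i.e. `P` is the Moore–Penrose inverse of `M`), then
`(H C)ᵀ P (H C) > 0`. -/
theorem waldQuadForm_pos_of_alternative
    (k r : ℕ) (hk : 1 ≤ k) (hr : 1 ≤ r)
    (S : Matrix (Fin k) (Fin k) ℝ) (hS : S.PosDef)
    (H : Matrix (Fin r) (Fin k) ℝ) (C : Fin k → ℝ)
    (hHC : H.mulVec C ≠ 0)
    (P : Matrix (Fin r) (Fin r) ℝ)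
    (hP1 : (H * S * Hᵀ) * P * (H * S * Hᵀ) = H * S * Hᵀ)
    (hP2 : P * (H * S * Hᵀ) * P = P)
    (hP3 : ((H * S * Hᵀ) * P)ᵀ = (H * S * Hᵀ) * P)
    (hP4 : (P * (H * S * Hᵀ))ᵀ = P * (H * S * Hᵀ)) :
    0 < H.mulVec C ⬝ᵥ P.mulVec (H.mulVec C) := by
  classical
  set A := (open scoped MatrixOrder in CFC.sqrt S) with hA
  have hAsym : Aᵀ = A := by
    have := (open scoped MatrixOrder in (CFC.sqrt_nonneg S).posSemidef).isHermitian
    rw [Matrix.IsHermitian, Matrix.conjTranspose_eq_transpose_of_trivial] at this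
    exact this
  have hAA : A * A = S := open scoped MatrixOrder in CFC.sqrt_mul_sqrt_self S hS.posSemidef.nonneg
  set B := H * A with hB
  have hM : H * S * Hᵀ = B * Bᵀ := by
    rw [hB, Matrix.transpose_mul, hAsym, ← hAA]
    simp [Matrix.mul_assoc]
  have hSinv : IsUnit S.det := hS.det_pos.ne'.isUnit
  have hAu : A * (A * S⁻¹) = 1 := by
    rw [← Matrix.mul_assoc, hAA, Matrix.mul_nonsing_inv _ hSinv]
  have hHAu : H * A * (A * S⁻¹) = H := by
    rw [Matrix.mul_assoc, hAu, Matrix.mul_one]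
  have hv : H *ᵥ C = B *ᵥ ((A * S⁻¹) *ᵥ C) := by
    rw [hB, Matrix.mulVec_mulVec, hHAu]
  have hrange : LinearMap.range (B * Bᵀ).mulVecLin = LinearMap.range B.mulVecLin := by
    apply Submodule.eq_of_le_of_finrank_eq
    · rintro x ⟨y, rfl⟩
      refine ⟨Bᵀ *ᵥ y, ?_⟩
      simp only [Matrix.mulVecLin_apply]
      rw [Matrix.mulVec_mulVec]
    · exact Matrix.rank_self_mul_transpose B
  obtain ⟨w, hw⟩ : ∃ w, (B * Bᵀ) *ᵥ w = H *ᵥ C := by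
    have : H *ᵥ C ∈ LinearMap.range (B * Bᵀ).mulVecLin := by
      rw [hrange]; exact ⟨(A * S⁻¹) *ᵥ C, hv.symm⟩
    obtain ⟨w, hw⟩ := this
    exact ⟨w, hw⟩
  have hMsym : (B * Bᵀ)ᵀ = B * Bᵀ := by
    rw [Matrix.transpose_mul, Matrix.transpose_transpose]
  rw [hM] at hP1
  have key : H *ᵥ C ⬝ᵥ P *ᵥ (H *ᵥ C) = (Bᵀ *ᵥ w) ⬝ᵥ (Bᵀ *ᵥ w) :=
    calc H *ᵥ C ⬝ᵥ P *ᵥ (H *ᵥ C)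
        = ((B * Bᵀ) *ᵥ w) ⬝ᵥ ((P * (B * Bᵀ)) *ᵥ w) := by rw [← hw, Matrix.mulVec_mulVec]
      _ = (w ᵥ* (B * Bᵀ)ᵀ) ⬝ᵥ ((P * (B * Bᵀ)) *ᵥ w) := by rw [Matrix.vecMul_transpose]
      _ = w ⬝ᵥ ((B * Bᵀ)ᵀ * (P * (B * Bᵀ))) *ᵥ w := by
            rw [← Matrix.dotProduct_mulVec, Matrix.mulVec_mulVec]
      _ = w ⬝ᵥ (B * Bᵀ) *ᵥ w := by rw [hMsym, ← Matrix.mul_assoc, hP1]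
      _ = (w ᵥ* B) ⬝ᵥ (Bᵀ *ᵥ w) := by
            rw [← Matrix.mulVec_mulVec, Matrix.dotProduct_mulVec]
      _ = (Bᵀ *ᵥ w) ⬝ᵥ (Bᵀ *ᵥ w) := by rw [Matrix.mulVec_transpose]
  rw [key]
  have ht : Bᵀ *ᵥ w ≠ 0 := by
    intro h
    apply hHC
    rw [← hw, ← Matrix.mulVec_mulVec, h, Matrix.mulVec_zero]
  have h0 : (Bᵀ *ᵥ w) ⬝ᵥ (Bᵀ *ᵥ w) ≠ 0 := fun h => ht (dotProduct_self_eq_zero.mp h)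
  have hnn : 0 ≤ (Bᵀ *ᵥ w) ⬝ᵥ (Bᵀ *ᵥ w) :=
    Finset.sum_nonneg fun i _ => mul_self_nonneg _
  exact lt_of_le_of_ne hnn (Ne.symm h0)
end

section
/- Positive variance of quadratic statistics when no coordinate is conditionally two-point distributed (general form of Lemma 2): Let d ≥ 1 and let X = (X_1, …, X_d) be a random vector in ℝ^d on a probability space (Ω, 𝓕, P) with E‖X‖⁴ < ∞. Let a_s (s = 1,…,d) and b_{sr} (s, r = 1,…,d) be real numbers with b_{mm} ≠ 0 for some fixed index m, and assume that there do NOT exist Borel measurable functions f, g : ℝ^d → ℝ with f(x) = f(y) and g(x) = g(y) whenever x_s = y_s for all s ≠ m, such that P( X_m = f(X) or X_m = g(X) ) = 1 (i.e. coordinate m of X is not conditionally two-point distributed). Then the random variable W = ∑_{s=1}^d a_s X_s + ∑_{s=1}^d ∑_{r=1}^d b_{sr} X_s X_r has strictly positive variance: Var(W) > 0. -/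
open MeasureTheory ProbabilityTheory BigOperators

section Aux
variable {d : ℕ} (a : Fin d → ℝ) (b : Fin d → Fin d → ℝ) (m : Fin d)

/-- linear coefficient of `x m` in the quadratic statistic. -/
def auxB (x : Fin d → ℝ) : ℝ :=
  a m + ∑ s ∈ Finset.univ.erase m, (b s m + b m s) * x s

/-- constant coefficient (ignoring `x m`). -/
def auxC (x : Fin d → ℝ) : ℝ :=
  (∑ s ∈ Finset.univ.erase m, a s * x s)
    + ∑ s ∈ Finset.univ.erase m, ∑ r ∈ Finset.univ.erase m, b s r * x s * x r

noncomputable def auxF (c : ℝ) (x : Fin d → ℝ) : ℝ :=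
  (-auxB a b m x + Real.sqrt ((auxB a b m x) ^ 2 - 4 * b m m * (auxC a b m x - c)))
    / (2 * b m m)

noncomputable def auxG (c : ℝ) (x : Fin d → ℝ) : ℝ :=
  (-auxB a b m x - Real.sqrt ((auxB a b m x) ^ 2 - 4 * b m m * (auxC a b m x - c)))
    / (2 * b m m)

lemma auxB_measurable : Measurable (auxB a b m) :=
  measurable_const.add <| Finset.measurable_sum _ fun s _ =>
    (measurable_pi_apply s).const_mul _

lemma auxC_measurable : Measurable (auxC a b m) := by
  refine Measurable.add ?_ ?_
  · exact Finset.measurable_sum _ fun s _ => (measurable_pi_apply s).const_mul _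
  · exact Finset.measurable_sum _ fun s _ => Finset.measurable_sum _ fun r _ =>
      (((measurable_pi_apply s).const_mul _).mul (measurable_pi_apply r))

lemma auxF_measurable (c : ℝ) : Measurable (auxF a b m c) := by
  apply Measurable.div _ measurable_const
  exact ((auxB_measurable a b m).neg).add <| Measurable.sqrt <|
    (((auxB_measurable a b m).pow_const 2).sub
      (((auxC_measurable a b m).sub measurable_const).const_mul _))

lemma auxG_measurable (c : ℝ) : Measurable (auxG a b m c) := by
  apply Measurable.div _ measurable_const
  exact ((auxB_measurable a b m).neg).sub <| Measurable.sqrt <|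
    (((auxB_measurable a b m).pow_const 2).sub
      (((auxC_measurable a b m).sub measurable_const).const_mul _))

lemma auxB_local {x y : Fin d → ℝ} (h : ∀ s, s ≠ m → x s = y s) :
    auxB a b m x = auxB a b m y := by
  unfold auxB
  congr 1
  exact Finset.sum_congr rfl fun s hs => by
    rw [h s (Finset.ne_of_mem_erase hs)]

lemma auxC_local {x y : Fin d → ℝ} (h : ∀ s, s ≠ m → x s = y s) :
    auxC a b m x = auxC a b m y := by
  unfold auxC
  congr 1
  · exact Finset.sum_congr rfl fun s hs => by rw [h s (Finset.ne_of_mem_erase hs)]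
  · exact Finset.sum_congr rfl fun s hs => Finset.sum_congr rfl fun r hr => by
      rw [h s (Finset.ne_of_mem_erase hs), h r (Finset.ne_of_mem_erase hr)]

lemma auxF_local (c : ℝ) {x y : Fin d → ℝ} (h : ∀ s, s ≠ m → x s = y s) :
    auxF a b m c x = auxF a b m c y := by
  unfold auxF
  rw [auxB_local a b m h, auxC_local a b m h]

lemma auxG_local (c : ℝ) {x y : Fin d → ℝ} (h : ∀ s, s ≠ m → x s = y s) :
    auxG a b m c x = auxG a b m c y := by
  unfold auxG
  rw [auxB_local a b m h, auxC_local a b m h]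

/-- Decomposition of the statistic as a quadratic in `x m`. -/
lemma aux_key (x : Fin d → ℝ) :
    (∑ s, a s * x s) + (∑ s, ∑ r, b s r * x s * x r)
      = b m m * (x m * x m) + auxB a b m x * x m + auxC a b m x := by
  have hsplit : ∀ (f : Fin d → ℝ), (∑ s, f s) = f m + ∑ s ∈ Finset.univ.erase m, f s :=
    fun f => (Finset.add_sum_erase _ f (Finset.mem_univ m)).symm
  rw [hsplit (fun s => a s * x s), hsplit (fun s => ∑ r, b s r * x s * x r),
    hsplit (fun r => b m r * x m * x r)]
  have h1 : ∑ s ∈ Finset.univ.erase m, (∑ r, b s r * x s * x r)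
      = ∑ s ∈ Finset.univ.erase m, (b s m * x s * x m + ∑ r ∈ Finset.univ.erase m, b s r * x s * x r) :=
    Finset.sum_congr rfl fun s _ => hsplit _
  rw [h1, Finset.sum_add_distrib]
  unfold auxB auxC
  rw [add_mul, Finset.sum_mul]
  have h2 : ∑ s ∈ Finset.univ.erase m, ((b s m + b m s) * x s * x m)
      = ∑ s ∈ Finset.univ.erase m, (b s m * x s * x m)
        + ∑ s ∈ Finset.univ.erase m, (b m s * x m * x s) := by
    rw [← Finset.sum_add_distrib]
    exact Finset.sum_congr rfl fun s _ => by ring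
  rw [h2]
  ring
end Aux

/-- If coordinate `m` of the random vector `X` (with finite fourth
moments) is *not* conditionally two-point distributed and `b_{mm} ≠ 0`, then the
quadratic statistic `W = ∑_s a_s X_s + ∑_{s,r} b_{sr} X_s X_r` has strictly positive
variance. -/
theorem variance_pos_of_not_condTwoPoint
    (d : ℕ) (hd : 1 ≤ d)
    {Ω : Type} [MeasurableSpace Ω] (P : Measure Ω) [IsProbabilityMeasure P]
    (X : Ω → Fin d → ℝ) (hX : Measurable X)
    (hmom : Integrable (fun ω => ‖X ω‖ ^ 4) P)
    (a : Fin d → ℝ) (b : Fin d → Fin d → ℝ)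
    (m : Fin d) (hbmm : b m m ≠ 0)
    (htp : ¬ ∃ f g : (Fin d → ℝ) → ℝ, Measurable f ∧ Measurable g
      ∧ (∀ x y : Fin d → ℝ, (∀ s, s ≠ m → x s = y s) → f x = f y)
      ∧ (∀ x y : Fin d → ℝ, (∀ s, s ≠ m → x s = y s) → g x = g y)
      ∧ P {ω | X ω m = f (X ω) ∨ X ω m = g (X ω)} = 1) :
    0 < variance (fun ω => (∑ s, a s * X ω s) + ∑ s, ∑ r, b s r * X ω s * X ω r) P := by
  set W : Ω → ℝ := fun ω => (∑ s, a s * X ω s) + ∑ s, ∑ r, b s r * X ω s * X ω r with hWdef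
  -- each coordinate is in L²
  have hXs : ∀ s, Measurable fun ω => X ω s := fun s => (measurable_pi_apply s).comp hX
  have habs : ∀ (ω : Ω) (s : Fin d), |X ω s| ≤ ‖X ω‖ := fun ω s => by
    simpa using norm_le_pi_norm (X ω) s
  have hns : ∀ s, MemLp (fun ω => X ω s) 2 P := by
    intro s
    rw [memLp_two_iff_integrable_sq (hXs s).aestronglyMeasurable]
    refine (hmom.add (integrable_const 1)).mono' (((hXs s).pow_const 2).aestronglyMeasurable)
      (ae_of_all _ fun ω => ?_)
    have h1 := habs ω s
    have h0 : (0:ℝ) ≤ ‖X ω‖ := norm_nonneg _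
    simp only [Pi.add_apply]
    rw [Real.norm_eq_abs, abs_pow]
    nlinarith [abs_nonneg (X ω s), mul_le_mul h1 h1 (abs_nonneg _) h0, sq_nonneg (‖X ω‖ ^ 2 - 1)]
  have hnsr : ∀ s r, MemLp (fun ω => X ω s * X ω r) 2 P := by
    intro s r
    rw [memLp_two_iff_integrable_sq (show Measurable (fun ω => X ω s * X ω r) from (hXs s).mul (hXs r)).aestronglyMeasurable]
    refine hmom.mono' (((hXs s).mul (hXs r)).pow_const 2).aestronglyMeasurable
      (ae_of_all _ fun ω => ?_)
    have h1 := habs ω s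
    have h2 := habs ω r
    have h0 : (0:ℝ) ≤ ‖X ω‖ := norm_nonneg _
    rw [Real.norm_eq_abs, abs_pow, abs_mul]
    have hm := mul_le_mul h1 h2 (abs_nonneg _) h0
    nlinarith [mul_nonneg (abs_nonneg (X ω s)) (abs_nonneg (X ω r))]
  have hW2 : MemLp W 2 P := by
    refine MemLp.add ?_ ?_
    · exact memLp_finset_sum _ fun s _ => (hns s).const_mul (a s)
    · refine memLp_finset_sum _ fun s _ => memLp_finset_sum _ fun r _ => ?_
      have := (hnsr s r).const_mul (b s r)
      simpa [mul_assoc] using this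
  -- suppose variance is zero
  by_contra hle
  push_neg at hle
  have hv0 : variance W P = 0 := le_antisymm hle (variance_nonneg _ _)
  have he0 : evariance W P = 0 := by
    have hlt := hW2.evariance_lt_top
    rw [variance] at hv0
    exact (ENNReal.toReal_eq_zero_iff _).mp hv0 |>.resolve_right hlt.ne
  have hae : W =ᵐ[P] fun _ => P[W] :=
    (evariance_eq_zero_iff hW2.aestronglyMeasurable.aemeasurable).mp he0
  set c : ℝ := P[W] with hc
  -- build the two root functions and contradict htp
  apply htp
  refine ⟨auxF a b m c, auxG a b m c, auxF_measurable a b m c, auxG_measurable a b m c,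
    fun x y h => auxF_local a b m c h, fun x y h => auxG_local a b m c h, ?_⟩
  have hae' : ∀ᵐ ω ∂P, X ω m = auxF a b m c (X ω) ∨ X ω m = auxG a b m c (X ω) := by
    filter_upwards [hae] with ω hω
    set x := X ω with hx
    have hWx : (∑ s, a s * x s) + (∑ s, ∑ r, b s r * x s * x r) = c := hω
    have hq : b m m * (x m * x m) + auxB a b m x * x m + (auxC a b m x - c) = 0 := by
      have hk := aux_key a b m x
      linarith [hk, hWx]
    have hdx : discrim (b m m) (auxB a b m x) (auxC a b m x - c)
        = (auxB a b m x) ^ 2 - 4 * b m m * (auxC a b m x - c) := by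
      rw [discrim]
    have hd0 : 0 ≤ (auxB a b m x) ^ 2 - 4 * b m m * (auxC a b m x - c) := by
      have h := discrim_eq_sq_of_quadratic_eq_zero hq
      rw [hdx] at h
      rw [h]; positivity
    have hss : discrim (b m m) (auxB a b m x) (auxC a b m x - c)
        = Real.sqrt ((auxB a b m x) ^ 2 - 4 * b m m * (auxC a b m x - c))
          * Real.sqrt ((auxB a b m x) ^ 2 - 4 * b m m * (auxC a b m x - c)) := by
      rw [hdx, Real.mul_self_sqrt hd0]
    have := (quadratic_eq_zero_iff hbmm hss (x m)).mp hq
    unfold auxF auxG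
    exact this
  calc P {ω | X ω m = auxF a b m c (X ω) ∨ X ω m = auxG a b m c (X ω)}
      = P Set.univ := measure_congr (Filter.eventuallyEq_univ.mpr hae')
    _ = 1 := measure_univ
end

section
/- Delta method for reciprocals (the standardized-mean part of Theorem 1): Let (Ω_n, 𝓕_n, P_n) be probability spaces and T_n : Ω_n → ℝ measurable random variables, let C ∈ ℝ with C ≠ 0 and σ² ≥ 0, and suppose the law of √n·(T_n − C) converges weakly, as n → ∞, to the Gaussian measure N(0, σ²) on ℝ. Then the law of √n·(1/T_n − 1/C) converges weakly to N(0, σ²/C⁴), where 1/T_n is interpreted by any fixed convention on the event {T_n = 0} (e.g. 1/0 = 0). -/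
open MeasureTheory ProbabilityTheory Filter Topology

set_option maxHeartbeats 1000000 in
/-- Delta method for reciprocals: if `√n (T_n − C)` converges
weakly to `N(0, σ²)` with `C ≠ 0`, then `√n (1/T_n − 1/C)` converges weakly to
`N(0, σ²/C⁴)`. Weak convergence is phrased via integrals of bounded continuous
functions; `1/T_n` uses Lean's fixed convention `1/0 = 0` on the event `{T_n = 0}`. -/
theorem deltaMethod_reciprocal
    (Ω : ℕ → Type) [∀ n, MeasurableSpace (Ω n)]
    (P : ∀ n, Measure (Ω n)) [∀ n, IsProbabilityMeasure (P n)]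
    (T : ∀ n, Ω n → ℝ) (hT : ∀ n, Measurable (T n))
    (C : ℝ) (hC : C ≠ 0) (v : ℝ) (hv : 0 ≤ v)
    (hconv : ∀ f : BoundedContinuousFunction ℝ ℝ,
      Tendsto (fun n => ∫ ω, f (Real.sqrt n * (T n ω - C)) ∂(P n)) atTop
        (𝓝 (∫ x, f x ∂(gaussianReal 0 v.toNNReal)))) :
    ∀ f : BoundedContinuousFunction ℝ ℝ,
      Tendsto (fun n => ∫ ω, f (Real.sqrt n * (1 / T n ω - 1 / C)) ∂(P n)) atTop
        (𝓝 (∫ x, f x ∂(gaussianReal 0 (v / C ^ 4).toNNReal))) := by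
  intro f
  have hC2 : (0:ℝ) < C ^ 2 := by positivity
  have hC4 : (0:ℝ) < C ^ 4 := by positivity
  set ν : Measure ℝ := gaussianReal 0 v.toNNReal with hνdef
  -- the linear map of the delta method
  set h : ℝ → ℝ := fun x => (-(1 / C ^ 2)) * x with hhdef
  have hcont : Continuous h := continuous_const.mul continuous_id
  -- map of gaussian
  have hmap : ν.map h = gaussianReal 0 (v / C ^ 4).toNNReal := by
    rw [hνdef, hhdef]
    have hvar : (NNReal.mk ((-(1 / C ^ 2)) ^ 2) (sq_nonneg _) * v.toNNReal : NNReal)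
        = (v / C ^ 4).toNNReal := by
      apply NNReal.coe_injective
      rw [NNReal.coe_mul, Real.coe_toNNReal _ hv,
        Real.coe_toNNReal _ (div_nonneg hv hC4.le)]
      show (-(1 / C ^ 2)) ^ 2 * v = v / C ^ 4
      rw [neg_sq, div_pow, one_pow, ← pow_mul, one_div, inv_mul_eq_div]
    rw [show (fun x : ℝ => (-(1 / C ^ 2)) * x) = ((-(1 / C ^ 2)) * ·) from rfl,
      gaussianReal_map_const_mul, hvar, mul_zero]
  -- random variables
  set Z : ∀ n : ℕ, Ω n → ℝ := fun n ω => Real.sqrt n * (T n ω - C) with hZdef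
  have hZmeas : ∀ n, Measurable (Z n) := fun n =>
    measurable_const.mul ((hT n).sub measurable_const)
  -- the compared bounded continuous function
  set g : BoundedContinuousFunction ℝ ℝ := f.compContinuous ⟨h, hcont⟩ with hgdef
  have hg_apply : ∀ x, g x = f (h x) := fun x => rfl
  -- limit of ∫ f(h(Z n)) :
  have hlim : Tendsto (fun n => ∫ ω, f (h (Z n ω)) ∂(P n)) atTop
      (𝓝 (∫ x, f x ∂(gaussianReal 0 (v / C ^ 4).toNNReal))) := by
    have := hconv g
    have heq : (∫ x, g x ∂ν) = ∫ x, f x ∂(gaussianReal 0 (v / C ^ 4).toNNReal) := by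
      rw [← hmap, integral_map hcont.measurable.aemeasurable
        f.continuous.aestronglyMeasurable]
      rfl
    rw [heq] at this
    exact this
  -- probability measures on ℝ
  let μs : ℕ → ProbabilityMeasure ℝ := fun n =>
    ⟨(P n).map (Z n), Measure.isProbabilityMeasure_map (hZmeas n).aemeasurable⟩
  let μ : ProbabilityMeasure ℝ := ⟨ν, by rw [hνdef]; infer_instance⟩
  have hμs : Tendsto μs atTop (𝓝 μ) := by
    rw [ProbabilityMeasure.tendsto_iff_forall_integral_tendsto]
    intro φ
    have : ∀ n, ∫ x, φ x ∂((μs n : Measure ℝ)) = ∫ ω, φ (Z n ω) ∂(P n) := fun n =>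
      integral_map (hZmeas n).aemeasurable φ.continuous.aestronglyMeasurable
    simp only [this]
    exact hconv φ
  -- reduce to difference tending to zero
  have hsq : Tendsto (fun n : ℕ => Real.sqrt n) atTop atTop := by
    apply tendsto_atTop_atTop.mpr
    intro b
    refine ⟨⌈b ^ 2⌉₊, fun n hn => ?_⟩
    have hb : b ≤ Real.sqrt (b ^ 2) := by
      rcases le_or_gt b 0 with hb | hb
      · exact hb.trans (Real.sqrt_nonneg _)
      · rw [Real.sqrt_sq hb.le]
    refine hb.trans (Real.sqrt_le_sqrt ?_)
    calc b ^ 2 ≤ (⌈b ^ 2⌉₊ : ℝ) := Nat.le_ceil _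
      _ ≤ n := Nat.cast_le.mpr hn
  have key : Tendsto (fun n => (∫ ω, f (Real.sqrt n * (1 / T n ω - 1 / C)) ∂(P n))
      - ∫ ω, f (h (Z n ω)) ∂(P n)) atTop (𝓝 0) := by
    set B : ℝ := ‖f‖ with hB
    have hB0 : (0:ℝ) ≤ B := norm_nonneg f
    rw [NormedAddCommGroup.tendsto_nhds_zero]
    intro ε hε
    set ε2 : NNReal := (ε / (4 * (B + 1))).toNNReal with hε2def
    have hε2pos : 0 < ε2 := Real.toNNReal_pos.mpr (by positivity)
    have hε2coe : (ε2 : ℝ) = ε / (4 * (B + 1)) :=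
      Real.coe_toNNReal _ (by positivity)
    -- choose M via tightness of the limit measure
    obtain ⟨k, hk⟩ : ∃ k : ℕ, ν {x : ℝ | (k : ℝ) ≤ |x|} < (ε2 : ENNReal) := by
      have hanti : Antitone (fun k : ℕ => {x : ℝ | (k : ℝ) ≤ |x|}) := by
        intro a b hab x hx
        simp only [Set.mem_setOf_eq] at hx ⊢
        exact le_trans (Nat.cast_le.mpr hab) hx
      have hiInter : (⋂ k : ℕ, {x : ℝ | (k : ℝ) ≤ |x|}) = ∅ := by
        ext x
        simp only [Set.mem_iInter, Set.mem_setOf_eq, Set.mem_empty_iff_false, iff_false,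
          not_forall, not_le]
        obtain ⟨k, hk⟩ := exists_nat_gt |x|
        exact ⟨k, hk⟩
      have htend := tendsto_measure_iInter_atTop (μ := ν)
        (fun k => ((isClosed_le continuous_const continuous_abs).measurableSet).nullMeasurableSet)
        hanti ⟨0, measure_ne_top _ _⟩
      rw [hiInter, measure_empty] at htend
      exact (htend.eventually_lt_const (ENNReal.coe_pos.mpr hε2pos)).exists
    set M : ℝ := max (k : ℝ) 1 with hMdef
    have hM1 : (1:ℝ) ≤ M := le_max_right _ _
    have hM0 : (0:ℝ) < M := lt_of_lt_of_le one_pos hM1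
    set F : Set ℝ := {x : ℝ | M ≤ |x|} with hFdef
    have hFclosed : IsClosed F := isClosed_le continuous_const continuous_abs
    have hFmeas : MeasurableSet F := hFclosed.measurableSet
    have hsubF : F ⊆ {x : ℝ | (k : ℝ) ≤ |x|} := by
      intro x hx
      simp only [hFdef, Set.mem_setOf_eq] at hx ⊢
      exact le_trans (le_max_left _ _) hx
    have hνF : ν F < (ε2 : ENNReal) :=
      lt_of_le_of_lt (measure_mono hsubF) hk
    -- eventual smallness of the pushforward measures of F
    have hev1 : ∀ᶠ n in atTop, ((μs n : Measure ℝ) F) < (ε2 : ENNReal) := by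
      have hlimsup := ProbabilityMeasure.limsup_measure_closed_le_of_tendsto hμs hFclosed
      exact Filter.eventually_lt_of_limsup_lt (lt_of_le_of_lt hlimsup hνF)
    -- uniform continuity on a compact set
    set K : Set ℝ := Metric.closedBall 0 (M / C ^ 2 + 1) with hKdef
    have hKcomp : IsCompact K := isCompact_closedBall _ _
    have hfu := hKcomp.uniformContinuousOn_of_continuous f.continuous.continuousOn
    rw [Metric.uniformContinuousOn_iff] at hfu
    obtain ⟨δ0, hδ0, hδ⟩ := hfu (ε / 2) (by positivity)
    set δ : ℝ := min δ0 1 with hδdef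
    have hδpos : 0 < δ := lt_min hδ0 one_pos
    have hδ1 : δ ≤ 1 := min_le_right _ _
    have hδδ0 : δ ≤ δ0 := min_le_left _ _
    have hev2 : ∀ᶠ n : ℕ in atTop,
        max (2 * M / |C|) (2 * M ^ 2 / (|C| ^ 3 * δ) + 1) ≤ Real.sqrt n :=
      hsq.eventually_ge_atTop _
    have habsC : (0:ℝ) < |C| := abs_pos.mpr hC
    filter_upwards [hev1, hev2] with n hn1 hn2
    set s : ℝ := Real.sqrt n with hsdef
    have hs1 : 2 * M / |C| ≤ s := le_trans (le_max_left _ _) hn2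
    have hs2 : 2 * M ^ 2 / (|C| ^ 3 * δ) + 1 ≤ s := le_trans (le_max_right _ _) hn2
    have hs0 : (0:ℝ) < s := lt_of_lt_of_le (by positivity) hs2
    -- measurability and integrability
    have hψmeas : Measurable (fun ω => s * (1 / T n ω - 1 / C)) :=
      measurable_const.mul ((measurable_const.div (hT n)).sub measurable_const)
    have hint1 : Integrable (fun ω => f (s * (1 / T n ω - 1 / C))) (P n) :=
      (integrable_const B).mono'
        (f.continuous.measurable.comp hψmeas).aestronglyMeasurable
        (ae_of_all _ fun ω => f.norm_coe_le_norm _)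
    have hint2 : Integrable (fun ω => f (h (Z n ω))) (P n) :=
      (integrable_const B).mono'
        (f.continuous.measurable.comp (hcont.measurable.comp (hZmeas n))).aestronglyMeasurable
        (ae_of_all _ fun ω => f.norm_coe_le_norm _)
    have hintInd : Integrable
        (fun ω => (2 * B) * (Z n ⁻¹' F).indicator (1 : Ω n → ℝ) ω) (P n) :=
      (((integrable_const (1:ℝ)).indicator ((hZmeas n) hFmeas))).const_mul _
    have hint3 : Integrable
        (fun ω => ε / 2 + (2 * B) * (Z n ⁻¹' F).indicator (1 : Ω n → ℝ) ω) (P n) :=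
      (integrable_const _).add hintInd
    -- pointwise bound
    have hpt : ∀ ω, ‖f (s * (1 / T n ω - 1 / C)) - f (h (Z n ω))‖
        ≤ ε / 2 + (2 * B) * (Z n ⁻¹' F).indicator (1 : Ω n → ℝ) ω := by
      intro ω
      by_cases hω : M ≤ |Z n ω|
      · rw [Set.indicator_of_mem (by exact hω)]
        have := norm_sub_le (f (s * (1 / T n ω - 1 / C))) (f (h (Z n ω)))
        have h1 := f.norm_coe_le_norm (s * (1 / T n ω - 1 / C))
        have h2 := f.norm_coe_le_norm (h (Z n ω))
        have hε2 : (0:ℝ) ≤ ε / 2 := by positivity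
        simp only [Pi.one_apply, mul_one]
        linarith
      · rw [Set.indicator_of_notMem (by exact hω), mul_zero, add_zero]
        push_neg at hω
        set z : ℝ := Z n ω with hzdef
        set t : ℝ := T n ω with htdef
        have hz_eq : z = s * (t - C) := rfl
        have htC : |t - C| ≤ |C| / 2 := by
          have h1 : |t - C| = |z| / s := by
            rw [hz_eq, abs_mul, abs_of_pos hs0]
            field_simp
          rw [h1]
          rw [div_le_iff₀ hs0]
          have : 2 * M ≤ s * |C| := by
            rw [div_le_iff₀ habsC] at hs1
            linarith
          nlinarith [hω.le, abs_nonneg z]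
        have ht : |C| / 2 ≤ |t| := by
          have := abs_sub_abs_le_abs_sub t C
          have h2 : |C| - |t| ≤ |t - C| := by
            have := abs_sub_abs_le_abs_sub C t
            rwa [abs_sub_comm] at this
          linarith
        have ht0 : t ≠ 0 := by
          intro h0
          rw [h0, abs_zero] at ht
          linarith
        have hψeq : s * (1 / t - 1 / C) = -z / (t * C) := by
          rw [hz_eq]
          field_simp
          ring
        have hdiffeq : s * (1 / t - 1 / C) - h z = z ^ 2 / (s * t * C ^ 2) := by
          have hs0' : s ≠ 0 := hs0.ne'
          rw [hψeq, hhdef]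
          show -z / (t * C) - -(1 / C ^ 2) * z = z ^ 2 / (s * t * C ^ 2)
          field_simp
          linear_combination (z * C ^ 2 * t * s * C) * hz_eq
        have habs : |s * (1 / t - 1 / C) - h z| ≤ 2 * M ^ 2 / (s * |C| ^ 3) := by
          rw [hdiffeq, abs_div]
          have h1 : |z ^ 2| = z ^ 2 := abs_of_nonneg (sq_nonneg z)
          have h2 : |s * t * C ^ 2| = s * |t| * C ^ 2 := by
            rw [abs_mul, abs_mul, abs_of_pos hs0, abs_of_pos hC2]
          rw [h1, h2]
          have hz2 : z ^ 2 ≤ M ^ 2 := by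
            rw [← sq_abs z]
            exact pow_le_pow_left₀ (abs_nonneg z) hω.le 2
          have hstep : z ^ 2 / (s * |t| * C ^ 2) ≤ M ^ 2 / (s * (|C| / 2) * C ^ 2) := by
            apply div_le_div₀ (by positivity) hz2 (by positivity)
            gcongr
          refine hstep.trans_eq ?_
          have hC3 : |C| ^ 3 = C ^ 2 * |C| := by
            rw [pow_succ, sq_abs]
          rw [hC3]
          field_simp
        have hlt : 2 * M ^ 2 / (s * |C| ^ 3) < δ := by
          rw [div_lt_iff₀ (by positivity)]
          have hlt2 : 2 * M ^ 2 / (|C| ^ 3 * δ) < s :=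
            lt_of_lt_of_le (lt_add_of_pos_right _ one_pos) hs2
          rw [div_lt_iff₀ (by positivity)] at hlt2
          nlinarith
        have hhzabs : |h z| ≤ M / C ^ 2 := by
          rw [hhdef]
          show |-(1 / C ^ 2) * z| ≤ M / C ^ 2
          rw [abs_mul, abs_neg, abs_of_pos (by positivity : (0:ℝ) < 1 / C ^ 2)]
          rw [div_mul_eq_mul_div, one_mul]
          exact (div_le_div_iff_of_pos_right hC2).mpr hω.le
        have hhzK : h z ∈ K := by
          simp only [hKdef, Metric.mem_closedBall, Real.dist_eq, sub_zero]
          have : (0:ℝ) ≤ 1 := zero_le_one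
          linarith [hhzabs]
        have hψK : s * (1 / t - 1 / C) ∈ K := by
          simp only [hKdef, Metric.mem_closedBall, Real.dist_eq, sub_zero]
          have h3 : |s * (1 / t - 1 / C)| ≤ |s * (1 / t - 1 / C) - h z| + |h z| := by
            have := abs_sub_abs_le_abs_sub (s * (1 / t - 1 / C)) (h z)
            have := abs_add_le (s * (1 / t - 1 / C) - h z) (h z)
            calc |s * (1 / t - 1 / C)| = |(s * (1 / t - 1 / C) - h z) + h z| := by ring_nf
              _ ≤ |s * (1 / t - 1 / C) - h z| + |h z| := abs_add_le _ _
          linarith [habs, hlt.le, hhzabs, hδ1, h3]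
        have hdist := hδ _ hψK _ hhzK (by
          rw [Real.dist_eq]
          exact lt_of_le_of_lt habs (lt_of_lt_of_le hlt hδδ0))
        rw [dist_eq_norm] at hdist
        exact hdist.le
    -- integral bound
    have hmF : ((P n) (Z n ⁻¹' F)).toReal ≤ (ε2 : ℝ) := by
      have hmap' : (μs n : Measure ℝ) F = (P n) (Z n ⁻¹' F) :=
        Measure.map_apply (hZmeas n) hFmeas
      rw [← hmap']
      have := hn1.le
      calc ((μs n : Measure ℝ) F).toReal ≤ ((ε2 : ENNReal)).toReal :=
            ENNReal.toReal_mono (by simp) this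
        _ = (ε2 : ℝ) := by simp
    calc ‖(∫ ω, f (s * (1 / T n ω - 1 / C)) ∂(P n)) - ∫ ω, f (h (Z n ω)) ∂(P n)‖
        = ‖∫ ω, (f (s * (1 / T n ω - 1 / C)) - f (h (Z n ω))) ∂(P n)‖ := by
          rw [integral_sub hint1 hint2]
      _ ≤ ∫ ω, ‖f (s * (1 / T n ω - 1 / C)) - f (h (Z n ω))‖ ∂(P n) :=
          norm_integral_le_integral_norm _
      _ ≤ ∫ ω, (ε / 2 + (2 * B) * (Z n ⁻¹' F).indicator (1 : Ω n → ℝ) ω) ∂(P n) :=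
          integral_mono (hint1.sub hint2).norm hint3 hpt
      _ = ε / 2 + (2 * B) * ((P n) (Z n ⁻¹' F)).toReal := by
          rw [integral_add (integrable_const _) hintInd, integral_const,
            integral_const_mul, integral_indicator_one ((hZmeas n) hFmeas)]
          simp
          exact Or.inl rfl
      _ < ε := by
          have h2B : (2 * B) * ((P n) (Z n ⁻¹' F)).toReal ≤ (2 * B) * (ε2 : ℝ) := by
            apply mul_le_mul_of_nonneg_left hmF (by positivity)
          rw [hε2coe] at h2B
          have hkey : 2 * B * (ε / (4 * (B + 1))) < ε / 2 := by
            rw [mul_div_assoc', div_lt_div_iff₀ (by positivity) two_pos]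
            nlinarith
          linarith
  have := key.add hlim
  rw [zero_add] at this
  simpa using this
end
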